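/- In the pointwise setting of a spacelike codimension-2 immersion, assume the mean curvature vector H is nonzero. Then the immersion is ortho-umbilical (A_{⋆H} = 0) if and only if it is ξ-subgeodesic for some nonzero ξ ∈ W, i.e. there exist a nonzero ξ ∈ W and a symmetric bilinear form L : V × V → ℝ such that h(X,Y) = L(X,Y) · ξ for all X, Y ∈ V. -/

import Mathlib

open scoped RealInnerProductSpace

lemma span_two {W : Type*} [AddCommGroup W] [Module ℝ W] [FiniteDimensional ℝ W]
    (hW : Module.finrank ℝ W = 2) {a b : W} (hli : LinearIndependent ℝ ![a, b]) (w : W) :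
    ∃ s t : ℝ, w = s • a + t • b := by
  have hcard : Fintype.card (Fin 2) = Module.finrank ℝ W := by simp [hW]
  let B := basisOfLinearIndependentOfCardEqFinrank hli hcard
  have hB : ⇑B = ![a, b] := coe_basisOfLinearIndependentOfCardEqFinrank hli hcard
  have := B.sum_repr w
  rw [Fin.sum_univ_two, hB] at this
  exact ⟨B.repr w 0, B.repr w 1, by simpa using this.symm⟩

theorem stmt13
    {n : ℕ} (hn : 1 ≤ n)
    {V : Type*} [NormedAddCommGroup V] [InnerProductSpace ℝ V] [FiniteDimensional ℝ V]
    (hV : Module.finrank ℝ V = n)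
    {W : Type*} [AddCommGroup W] [Module ℝ W] [FiniteDimensional ℝ W]
    (hW : Module.finrank ℝ W = 2)
    (gbar : W →ₗ[ℝ] W →ₗ[ℝ] ℝ)
    (hgsymm : ∀ ξ η : W, gbar ξ η = gbar η ξ)
    (hgnd : ∀ ξ : W, (∀ η : W, gbar ξ η = 0) → ξ = 0)
    (h : V →ₗ[ℝ] V →ₗ[ℝ] W) (hsymm : ∀ X Y : V, h X Y = h Y X)
    (A : W →ₗ[ℝ] V →ₗ[ℝ] V)
    (hAsa : ∀ (ξ : W) (X Y : V), ⟪A ξ X, Y⟫ = ⟪X, A ξ Y⟫)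
    (hAh : ∀ (ξ : W) (X Y : V), ⟪A ξ X, Y⟫ = gbar (h X Y) ξ)
    (H : W) (hH : ∀ ξ : W, gbar H ξ = (LinearMap.trace ℝ V (A ξ)) / (n : ℝ))
    (ω : W →ₗ[ℝ] W →ₗ[ℝ] ℝ) (hωalt : ∀ ξ : W, ω ξ ξ = 0) (hωne : ω ≠ 0)
    (sd : W → W) (hsd : ∀ ξ η : W, gbar (sd ξ) η = ω ξ η)
    (hHne : H ≠ 0) :
    A (sd H) = 0 ↔
      ∃ ξ : W, ξ ≠ 0 ∧ ∃ L : V →ₗ[ℝ] V →ₗ[ℝ] ℝ,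
        (∀ X Y : V, L X Y = L Y X) ∧ ∀ X Y : V, h X Y = L X Y • ξ := by
  -- ω is skew-symmetric
  have hωskew : ∀ ξ η : W, ω ξ η = - ω η ξ := by
    intro ξ η
    have := hωalt (ξ + η)
    simp only [map_add, LinearMap.add_apply, hωalt] at this
    linarith
  -- gbar H (sd H) = 0
  have hgHsdH : gbar H (sd H) = 0 := by
    rw [hgsymm, hsd, hωalt]
  -- sd H ≠ 0
  have hsdHne : sd H ≠ 0 := by
    intro h0
    have hωH : ∀ η : W, ω H η = 0 := by
      intro η; rw [← hsd, h0, map_zero, LinearMap.zero_apply]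
    -- ω is nondegenerate on a 2-dim space
    obtain ⟨a, ha⟩ : ∃ a : W, ω a ≠ 0 := by
      by_contra hc; push_neg at hc
      exact hωne (LinearMap.ext fun a => by rw [hc a]; rfl)
    obtain ⟨b, hb⟩ : ∃ b : W, ω a b ≠ 0 := by
      by_contra hc; push_neg at hc
      exact ha (LinearMap.ext fun b => by rw [hc b]; rfl)
    have hli : LinearIndependent ℝ ![a, b] := by
      rw [linearIndependent_fin2]
      simp only [Matrix.cons_val_zero, Matrix.cons_val_one, Matrix.head_cons]
      refine ⟨fun hb0 => hb (by rw [hb0, map_zero]), fun c hc => ?_⟩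
      apply hb
      rw [← hc, map_smul, LinearMap.smul_apply, hωalt, smul_zero]
    obtain ⟨s, t, hst⟩ := span_two hW hli H
    have h1 : ω H a = t * ω b a := by
      rw [hst]; simp [hωalt]
    have h2 : ω H b = s * ω a b := by
      rw [hst]; simp [hωalt]
    have hba : ω b a ≠ 0 := by rw [hωskew]; simpa using hb
    have ht : t = 0 := by
      have := hωH a; rw [h1] at this
      exact (mul_eq_zero.mp this).resolve_right hba
    have hs : s = 0 := by
      have := hωH b; rw [h2] at this
      exact (mul_eq_zero.mp this).resolve_right hb
    exact hHne (by rw [hst, hs, ht, zero_smul, zero_smul, add_zero])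
  constructor
  · -- ortho-umbilical → subgeodesic with ξ = H
    intro hA0
    obtain ⟨η0, hη0⟩ : ∃ η : W, gbar H η ≠ 0 := by
      by_contra hc; push_neg at hc
      exact hHne (hgnd H hc)
    -- the linear functional f w = gbar w η0 / gbar H η0
    set f : W →ₗ[ℝ] ℝ := (gbar H η0)⁻¹ • gbar.flip η0 with hf
    have hfapp : ∀ w : W, f w = (gbar H η0)⁻¹ * gbar w η0 := fun w => rfl
    refine ⟨H, hHne, h.compr₂ f, ?_, ?_⟩
    · intro X Y
      simp only [LinearMap.compr₂_apply, hsymm X Y]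
    · intro X Y
      simp only [LinearMap.compr₂_apply]
      set v := h X Y with hv
      set u := v - f v • H with hu
      -- gbar u η0 = 0
      have h1 : gbar u η0 = 0 := by
        rw [hu, map_sub, LinearMap.sub_apply, map_smul, LinearMap.smul_apply, hfapp]
        field_simp
        rw [smul_eq_mul, div_mul_cancel₀ _ hη0, sub_self]
      -- gbar u (sd H) = 0
      have hvsd : gbar v (sd H) = 0 := by
        rw [← hAh (sd H) X Y, hA0]
        simp
      have h2 : gbar u (sd H) = 0 := by
        rw [hu, map_sub, LinearMap.sub_apply, map_smul, LinearMap.smul_apply, hvsd,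
          hgHsdH, smul_zero, sub_zero]
      -- η0 and sd H are linearly independent
      have hli : LinearIndependent ℝ ![η0, sd H] := by
        rw [linearIndependent_fin2]
        simp only [Matrix.cons_val_zero, Matrix.cons_val_one, Matrix.head_cons]
        refine ⟨hsdHne, fun c hc => ?_⟩
        apply hη0
        rw [← hc, map_smul, smul_eq_mul, hgsymm, hsd, hωalt, mul_zero]
      have hu0 : u = 0 := by
        apply hgnd
        intro η
        obtain ⟨s, t, hst⟩ := span_two hW hli η
        rw [hst, map_add, map_smul, map_smul, h1, h2]
        simp
      have : v = f v • H := by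
        have := sub_eq_zero.mp hu0
        exact this
      exact this
  · -- subgeodesic → ortho-umbilical
    rintro ⟨ξ, hξne, L, hLsymm, hLh⟩
    obtain ⟨η1, hη1⟩ : ∃ η : W, gbar ξ η ≠ 0 := by
      by_contra hc; push_neg at hc
      exact hξne (hgnd ξ hc)
    have key : ∀ (η : W) (X Y : V), ⟪A η X, Y⟫ = L X Y * gbar ξ η := by
      intro η X Y
      rw [hAh, hLh, map_smul, LinearMap.smul_apply, smul_eq_mul]
    -- (gbar ξ η1) • A η = (gbar ξ η) • A η1
    have hop : ∀ η : W, (gbar ξ η1) • A η = (gbar ξ η) • A η1 := by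
      intro η
      ext X
      apply ext_inner_right ℝ
      intro Y
      simp only [LinearMap.smul_apply]
      rw [real_inner_smul_left, real_inner_smul_left, key, key]
      ring
    -- hence gbar H η = c * gbar ξ η
    set K : ℝ := LinearMap.trace ℝ V (A η1) / (gbar ξ η1) with hK
    have htr : ∀ η : W, LinearMap.trace ℝ V (A η) = gbar ξ η * K := by
      intro η
      have := congrArg (LinearMap.trace ℝ V) (hop η)
      rw [map_smul, map_smul, smul_eq_mul, smul_eq_mul] at this
      rw [hK]
      field_simp
      linarith [this]
    set c : ℝ := K / n with hc
    have hHc : H = c • ξ := by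
      have : ∀ η : W, gbar (H - c • ξ) η = 0 := by
        intro η
        rw [map_sub, LinearMap.sub_apply, hH, htr, map_smul, LinearMap.smul_apply,
          smul_eq_mul, hc]
        field_simp
        ring
      exact (sub_eq_zero.mp (hgnd _ this))
    have hξsd : gbar ξ (sd H) = 0 := by
      rw [hgsymm, hsd, hHc, map_smul, LinearMap.smul_apply, hωalt, smul_zero]
    ext X
    apply ext_inner_right ℝ
    intro Y
    rw [key, hξsd, mul_zero]
    simp
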